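/- Let M be a d×d doubly-stochastic matrix with all diagonal entries bounded below by some constant γ > 0. For a column vector V ∈ ℝ^d, define its dispersion D(V) = Σ_{1≤i,j≤d} |V(i) − V(j)|. Then for every V ∈ ℝ^d, D(V) − D(MV) ≥ γ·‖MV − V‖₁. -/

import Mathlib

/-- Let `M` be a `d × d` doubly-stochastic matrix with all diagonal
entries at least `γ > 0`. With the dispersion `D(V) = Σ_{i,j} |V(i) − V(j)|`, every
`V ∈ ℝᵈ` satisfies `D(V) − D(MV) ≥ γ·‖MV − V‖₁`. -/
theorem dispersion_decrease
    (d : ℕ) (γ : ℝ) (hγ : 0 < γ)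
    (M : Matrix (Fin d) (Fin d) ℝ)
    (hM : ∀ i j, 0 ≤ M i j) (hrow : ∀ i, ∑ j, M i j = 1) (hcol : ∀ j, ∑ i, M i j = 1)
    (hdiag : ∀ i, γ ≤ M i i)
    (V : Fin d → ℝ) :
    γ * ∑ i, |M.mulVec V i - V i| ≤
      (∑ i, ∑ j, |V i - V j|) - ∑ i, ∑ j, |M.mulVec V i - M.mulVec V j| := by
  set W := M.mulVec V with hW
  have hWeq : ∀ i, W i = ∑ k, M i k * V k := by
    intro i; simp [hW, Matrix.mulVec, dotProduct]
  set A : Fin d → Fin d → ℝ := fun i j => ∑ k, ∑ l, M i k * M j l * |V k - V l| with hA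
  -- W i - W j as a convex combination of differences
  have key1 : ∀ i j, W i - W j = ∑ k, ∑ l, M i k * M j l * (V k - V l) := by
    intro i j
    have h1 : ∑ k, ∑ l, M i k * M j l * (V k - V l)
        = (∑ k, M i k * V k) * (∑ l, M j l) - (∑ k, M i k) * (∑ l, M j l * V l) := by
      rw [Finset.sum_mul_sum, Finset.sum_mul_sum, ← Finset.sum_sub_distrib]
      refine Finset.sum_congr rfl fun k _ => ?_
      rw [← Finset.sum_sub_distrib]
      exact Finset.sum_congr rfl fun l _ => by ring
    rw [h1, hrow i, hrow j, mul_one, one_mul, hWeq i, hWeq j]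
  -- triangle inequality
  have key2 : ∀ i j, |W i - W j| ≤ A i j := by
    intro i j
    rw [key1]
    refine (Finset.abs_sum_le_sum_abs _ _).trans (Finset.sum_le_sum fun k _ => ?_)
    refine (Finset.abs_sum_le_sum_abs _ _).trans (Finset.sum_le_sum fun l _ => ?_)
    rw [abs_mul, abs_of_nonneg (mul_nonneg (hM i k) (hM j l))]
  -- total mass
  have keytot : ∑ i, ∑ j, A i j = ∑ k, ∑ l, |V k - V l| := by
    have step : ∀ k, ∑ i, ∑ j, ∑ l, M i k * M j l * |V k - V l|
        = ∑ l, |V k - V l| := by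
      intro k
      have inner : ∑ j, ∑ l, M j l * |V k - V l| = ∑ l, |V k - V l| := by
        rw [Finset.sum_comm]
        refine Finset.sum_congr rfl fun l _ => ?_
        rw [← Finset.sum_mul, hcol l, one_mul]
      calc ∑ i, ∑ j, ∑ l, M i k * M j l * |V k - V l|
          = ∑ i, M i k * (∑ j, ∑ l, M j l * |V k - V l|) := by
            refine Finset.sum_congr rfl fun i _ => ?_
            rw [Finset.mul_sum]
            refine Finset.sum_congr rfl fun j _ => ?_
            rw [Finset.mul_sum]
            exact Finset.sum_congr rfl fun l _ => by ring
        _ = (∑ i, M i k) * (∑ j, ∑ l, M j l * |V k - V l|) := by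
            rw [Finset.sum_mul]
        _ = ∑ l, |V k - V l| := by rw [hcol k, one_mul, inner]
    calc ∑ i, ∑ j, A i j
        = ∑ i, ∑ k, ∑ j, ∑ l, M i k * M j l * |V k - V l| :=
          Finset.sum_congr rfl fun i _ => Finset.sum_comm
      _ = ∑ k, ∑ i, ∑ j, ∑ l, M i k * M j l * |V k - V l| := Finset.sum_comm
      _ = ∑ k, ∑ l, |V k - V l| := Finset.sum_congr rfl fun k _ => step k
  -- diagonal slack
  have key3 : ∀ i, γ * |W i - V i| ≤ A i i := by
    intro i
    have hWV : W i - V i = ∑ k, M i k * (V k - V i) := by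
      have : ∑ k, M i k * (V k - V i) = (∑ k, M i k * V k) - (∑ k, M i k) * V i := by
        rw [Finset.sum_mul, ← Finset.sum_sub_distrib]
        exact Finset.sum_congr rfl fun k _ => by ring
      rw [this, hrow i, one_mul, hWeq i]
    calc γ * |W i - V i| ≤ γ * ∑ k, M i k * |V k - V i| := by
          refine mul_le_mul_of_nonneg_left ?_ hγ.le
          rw [hWV]
          refine (Finset.abs_sum_le_sum_abs _ _).trans (Finset.sum_le_sum fun k _ => ?_)
          rw [abs_mul, abs_of_nonneg (hM i k)]
      _ = ∑ k, γ * (M i k * |V k - V i|) := Finset.mul_sum _ _ _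
      _ ≤ ∑ k, M i k * M i i * |V k - V i| := by
          refine Finset.sum_le_sum fun k _ => ?_
          have h0 : 0 ≤ M i k * |V k - V i| := mul_nonneg (hM i k) (abs_nonneg _)
          calc γ * (M i k * |V k - V i|) ≤ M i i * (M i k * |V k - V i|) :=
                mul_le_mul_of_nonneg_right (hdiag i) h0
            _ = M i k * M i i * |V k - V i| := by ring
      _ ≤ A i i := by
          refine Finset.sum_le_sum fun k _ => ?_
          exact Finset.single_le_sum (f := fun l => M i k * M i l * |V k - V l|)
            (fun l _ => mul_nonneg (mul_nonneg (hM i k) (hM i l)) (abs_nonneg _))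
            (Finset.mem_univ i)
  -- put everything together
  have main : ∑ i, γ * |W i - V i| ≤ ∑ i, ∑ j, (A i j - |W i - W j|) := by
    refine Finset.sum_le_sum fun i _ => ?_
    calc γ * |W i - V i| ≤ A i i := key3 i
      _ = A i i - |W i - W i| := by simp
      _ ≤ ∑ j, (A i j - |W i - W j|) :=
          Finset.single_le_sum (fun j _ => sub_nonneg.mpr (key2 i j)) (Finset.mem_univ i)
  have expand : ∑ i, ∑ j, (A i j - |W i - W j|)
      = (∑ k, ∑ l, |V k - V l|) - ∑ i, ∑ j, |W i - W j| := by
    rw [← keytot, ← Finset.sum_sub_distrib]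
    exact Finset.sum_congr rfl fun i _ => Finset.sum_sub_distrib _ _
  calc γ * ∑ i, |W i - V i| = ∑ i, γ * |W i - V i| := Finset.mul_sum _ _ _
    _ ≤ ∑ i, ∑ j, (A i j - |W i - W j|) := main
    _ = _ := expand
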